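/- If $U$ is a bounded subset of $\mathbb{R}^n$ whose boundary has Lebesgue measure zero (i.e., $U$ has Jordan content), then $\lim_{r \to 0} r^n \cdot \#(U \cap r\mathbb{Z}^n) = \operatorname{vol}(U)$. -/

import Mathlib

open Filter MeasureTheory Set Metric
open scoped ENNReal

section aux

variable {n : ℕ}

/-- The floor map `x ↦ ⌊x/r⌋` coordinatewise. -/
noncomputable def fl (r : ℝ) (x : Fin n → ℝ) : Fin n → ℤ := fun i => ⌊x i / r⌋

lemma fl_measurable (r : ℝ) : Measurable (fl (n := n) r) := by
  refine measurable_pi_lambda _ fun i => ?_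
  exact Measurable.floor (f := fun x : Fin n → ℝ => x i / r) (by fun_prop)

lemma fl_fiber (r : ℝ) (hr : 0 < r) (v : Fin n → ℤ) :
    fl r ⁻¹' {v} = Set.pi Set.univ fun i => Set.Ico (r * v i) (r * v i + r) := by
  ext x
  simp only [Set.mem_preimage, Set.mem_singleton_iff, funext_iff, fl, Set.mem_pi,
    Set.mem_univ, true_implies, Set.mem_Ico]
  refine forall_congr' fun i => ?_
  rw [Int.floor_eq_iff]
  constructor
  · rintro ⟨h1, h2⟩
    constructor
    · rw [le_div_iff₀ hr] at h1; linarith [h1]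
    · rw [div_lt_iff₀ hr] at h2; push_cast at h2 ⊢; nlinarith
  · rintro ⟨h1, h2⟩
    constructor
    · rw [le_div_iff₀ hr]; linarith
    · rw [div_lt_iff₀ hr]; push_cast; nlinarith

lemma fl_fiber_volume (r : ℝ) (hr : 0 < r) (v : Fin n → ℤ) :
    volume (fl r ⁻¹' {v}) = ENNReal.ofReal r ^ n := by
  rw [fl_fiber r hr, volume_pi_pi]
  simp [Real.volume_Ico]

lemma dist_fl (r : ℝ) (hr : 0 < r) (x : Fin n → ℝ) :
    dist x (fun i => r * (fl r x i : ℝ)) ≤ r := by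
  rw [dist_pi_le_iff hr.le]
  intro i
  rw [Real.dist_eq, abs_le]
  have h1 : (⌊x i / r⌋ : ℝ) ≤ x i / r := Int.floor_le _
  have h3 : r * (⌊x i / r⌋ : ℝ) ≤ x i := by
    rw [mul_comm, ← le_div_iff₀ hr]; exact h1
  have h2 : x i / r - 1 < ⌊x i / r⌋ := Int.sub_one_lt_floor _
  have h4 : x i < ((⌊x i / r⌋ : ℝ) + 1) * r := (div_lt_iff₀ hr).1 (by linarith)
  simp only [fl]
  constructor <;> nlinarith

end aux

theorem stmt9 (n : ℕ) (U : Set (Fin n → ℝ)) (hbd : Bornology.IsBounded U)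
    (hfr : volume (frontier U) = 0) :
    Tendsto
      (fun r : ℝ => r ^ n * ({v : Fin n → ℤ | (fun i => r * (v i : ℝ)) ∈ U}.ncard : ℝ))
      (nhdsWithin 0 (Set.Ioi 0)) (nhds (volume U).toReal) := by
  have hUvol : volume (interior U) = volume U := by
    refine le_antisymm (measure_mono interior_subset) ?_
    calc volume U ≤ volume (interior U ∪ frontier U) := by
          refine measure_mono ?_
          rw [← closure_eq_interior_union_frontier]
          exact subset_closure
      _ ≤ volume (interior U) + volume (frontier U) := measure_union_le _ _
      _ = volume (interior U) := by rw [hfr, add_zero]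
  set S : ℝ → Set (Fin n → ℤ) := fun r => {v : Fin n → ℤ | (fun i => r * (v i : ℝ)) ∈ U}
    with hS_def
  set A : ℝ → Set (Fin n → ℝ) := fun r => fl r ⁻¹' (S r) with hA_def
  obtain ⟨C, hC0, hC⟩ : ∃ C : ℝ, 0 ≤ C ∧ U ⊆ closedBall 0 C := by
    obtain ⟨C, hC⟩ := hbd.subset_closedBall 0
    exact ⟨max C 0, le_max_right _ _,
      hC.trans (closedBall_subset_closedBall (le_max_left _ _))⟩
  have hSfin : ∀ r : ℝ, 0 < r → (S r).Finite := by
    intro r hr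
    refine (Set.Finite.pi fun _ : Fin n => Set.finite_Icc (-⌈C / r⌉) ⌈C / r⌉).subset ?_
    intro v hv
    have hmem : (fun i => r * (v i : ℝ)) ∈ closedBall (0 : Fin n → ℝ) C := hC hv
    rw [mem_closedBall, dist_zero_right] at hmem
    intro i _
    have hi : |r * (v i : ℝ)| ≤ C := by
      calc |r * (v i : ℝ)| = ‖(fun i => r * (v i : ℝ)) i‖ := rfl
        _ ≤ C := (norm_le_pi_norm _ i).trans hmem
    rw [abs_mul, abs_of_pos hr] at hi
    have hvi : |(v i : ℝ)| ≤ C / r := by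
      rw [le_div_iff₀ hr]; nlinarith [abs_nonneg (v i : ℝ)]
    rw [abs_le] at hvi
    refine Set.mem_Icc.2 ⟨?_, ?_⟩
    · have h2 : -(⌈C / r⌉ : ℝ) ≤ (v i : ℝ) :=
        le_trans (by simpa using neg_le_neg (Int.le_ceil (C / r))) hvi.1
      exact_mod_cast h2
    · exact_mod_cast hvi.2.trans (Int.le_ceil _)
  have hAmeas : ∀ r : ℝ, 0 < r → MeasurableSet (A r) := by
    intro r hr
    rw [hA_def]
    exact (fl_measurable r) (Set.Countable.measurableSet ((hSfin r hr).countable))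
  have hAvol : ∀ r : ℝ, 0 < r →
      volume (A r) = ((S r).ncard : ℝ≥0∞) * ENNReal.ofReal r ^ n := by
    intro r hr
    have hfin := hSfin r hr
    have : A r = fl r ⁻¹' ((hfin.toFinset : Finset (Fin n → ℤ)) : Set (Fin n → ℤ)) := by
      rw [hA_def, hfin.coe_toFinset]
    rw [this, ← sum_measure_preimage_singleton _
      (fun v _ => (fl_measurable r) (measurableSet_singleton v))]
    simp only [fl_fiber_volume r hr, Finset.sum_const, nsmul_eq_mul]
    rw [Set.ncard_eq_toFinset_card _ hfin]
  -- key integral identity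
  have hkey : ∀ r : ℝ, 0 < r →
      r ^ n * ((S r).ncard : ℝ) = ∫ x, (A r).indicator (1 : (Fin n → ℝ) → ℝ) x := by
    intro r hr
    rw [MeasureTheory.integral_indicator_one (hAmeas r hr), measureReal_def, hAvol r hr]
    rw [ENNReal.toReal_mul, ENNReal.toReal_pow, ENNReal.toReal_ofReal hr.le,
      ENNReal.toReal_natCast]
    ring
  have hIntU : ∫ x, (interior U).indicator (1 : (Fin n → ℝ) → ℝ) x = (volume U).toReal := by
    rw [integral_indicator_one isOpen_interior.measurableSet, measureReal_def, hUvol]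
  have hmain : Tendsto (fun r : ℝ => ∫ x, (A r).indicator (1 : (Fin n → ℝ) → ℝ) x)
      (nhdsWithin (0:ℝ) (Set.Ioi 0))
      (nhds (∫ x, (interior U).indicator (1 : (Fin n → ℝ) → ℝ) x)) := by
    refine tendsto_integral_filter_of_dominated_convergence
      ((cthickening 1 U).indicator (1 : (Fin n → ℝ) → ℝ)) ?_ ?_ ?_ ?_
    · filter_upwards [self_mem_nhdsWithin] with r hr
      exact (measurable_one.indicator (hAmeas r hr)).aestronglyMeasurable
    · filter_upwards [Ioc_mem_nhdsGT one_pos] with r hr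
      have hsub : A r ⊆ cthickening 1 U := by
        intro x hx
        exact mem_cthickening_of_dist_le x _ 1 U hx ((dist_fl r hr.1 x).trans hr.2)
      refine Eventually.of_forall fun x => ?_
      rw [norm_indicator_eq_indicator_norm]
      exact (Set.indicator_le_indicator_apply_of_subset (a := x) (f := fun _ => (1:ℝ)) hsub
        zero_le_one).trans_eq' (by simp)
    · rw [integrable_indicator_iff isClosed_cthickening.measurableSet]
      refine integrableOn_const ?_
      exact (hbd.cthickening).measure_lt_top.ne
    · have hfr' : ∀ᵐ x : (Fin n → ℝ), x ∉ frontier U := by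
        rw [ae_iff]
        simpa [not_not] using hfr
      filter_upwards [hfr'] with x hx
      have hdist : Tendsto (fun r : ℝ => (fun i => r * (fl r x i : ℝ)))
          (nhdsWithin (0:ℝ) (Set.Ioi 0)) (nhds x) := by
        rw [tendsto_iff_dist_tendsto_zero]
        refine squeeze_zero' (Eventually.of_forall fun r => dist_nonneg) ?_
          (tendsto_id.mono_left nhdsWithin_le_nhds)
        filter_upwards [self_mem_nhdsWithin] with r hr
        rw [dist_comm]
        exact dist_fl r hr x
      by_cases hxint : x ∈ interior U
      · have hev : ∀ᶠ r in nhdsWithin (0:ℝ) (Set.Ioi 0),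
            (fun i => r * (fl r x i : ℝ)) ∈ interior U :=
          hdist.eventually_mem (isOpen_interior.mem_nhds hxint)
        have h1 : (interior U).indicator (1 : (Fin n → ℝ) → ℝ) x = 1 :=
          Set.indicator_of_mem hxint _
        rw [h1]
        refine Tendsto.congr' ?_ tendsto_const_nhds
        filter_upwards [hev] with r hr
        exact (Set.indicator_of_mem (show x ∈ A r from interior_subset (s := U) hr) (1 : (Fin n → ℝ) → ℝ)).symm
      · have h : x ∉ closure U := fun hc => hx ⟨hc, hxint⟩
        -- x ∉ closure U
        have hev : ∀ᶠ r in nhdsWithin (0:ℝ) (Set.Ioi 0),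
            (fun i => r * (fl r x i : ℝ)) ∈ (closure U)ᶜ :=
          hdist.eventually_mem (isClosed_closure.isOpen_compl.mem_nhds h)
        have h0 : (interior U).indicator (1 : (Fin n → ℝ) → ℝ) x = 0 :=
          Set.indicator_of_notMem (fun hxi => h (interior_subset_closure hxi)) _
        rw [h0]
        refine Tendsto.congr' ?_ tendsto_const_nhds
        filter_upwards [hev] with r hr
        exact (Set.indicator_of_notMem (show x ∉ A r from fun hxa => hr (subset_closure (s := U) hxa)) (1 : (Fin n → ℝ) → ℝ)).symm
  rw [hIntU] at hmain
  refine Tendsto.congr' ?_ hmain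
  filter_upwards [self_mem_nhdsWithin] with r hr
  exact (hkey r hr).symm
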